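/- There exists a constant C⊥ > 0, depending only on α and β, such that for every bounded interval D ⊂ ℝ and every u ∈ H¹(D): inf over v ∈ V(D) of ( ∫_D |u − v|² + ∫_D |u' − v'|² ) ≤ C⊥² ∫_{D ∩ F₁} |u'|². Equivalently, the H¹(D)-norm of the orthogonal projection of u onto the orthogonal complement of V(D) in H¹(D) is at most C⊥ ‖u'‖_{L²(D ∩ F₁)}, uniformly over all bounded intervals D. -/

import Mathlib

open MeasureTheory Real Set
open scoped ComplexConjugate

noncomputable section

/-- `u ∈ H¹(a,b)` with (weak) derivative `u'`. -/
def IsH1On (a b : ℝ) (u u' : ℝ → ℂ) : Prop :=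
  MemLp u' 2 (volume.restrict (Ioo a b)) ∧
  ∀ x ∈ Icc a b, u x = u a + ∫ t in a..x, u' t

/-- The periodic "stiff" component `F₁ = ∪ₙ ((n, n+α) ∪ (n+β, n+1))`. -/
def F1 (α β : ℝ) : Set ℝ :=
  ⋃ n : ℤ, (Ioo (n : ℝ) ((n : ℝ) + α) ∪ Ioo ((n : ℝ) + β) ((n : ℝ) + 1))

/-- `Memℒp` for `p = 2` implies integrability of the squared norm. -/
lemma memL2_integrable_sq {μ : Measure ℝ} {h : ℝ → ℂ} (hh : MemLp h 2 μ) :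
    Integrable (fun x => ‖h x‖ ^ 2) μ := by
  have := hh.integrable_norm_rpow two_ne_zero ENNReal.ofNat_ne_top
  simpa [ENNReal.toReal_ofNat, Real.rpow_natCast] using this

/-- Cauchy–Schwarz on a set of measure at most 1. -/
lemma sq_norm_setIntegral_le {s : Set ℝ} (hμ : volume s ≤ 1)
    {h : ℝ → ℂ} (hh : MemLp h 2 (volume.restrict s)) :
    ‖∫ x in s, h x‖ ^ 2 ≤ ∫ x in s, ‖h x‖ ^ 2 := by
  haveI : IsFiniteMeasure (volume.restrict s) :=
    ⟨by rw [Measure.restrict_apply_univ]; exact hμ.trans_lt ENNReal.one_lt_top⟩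
  have hconj : (2:ℝ).HolderConjugate 2 := Real.HolderConjugate.two_two
  have hh' : MemLp h (ENNReal.ofReal (2:ℝ)) (volume.restrict s) := by
    simpa [ENNReal.ofReal_ofNat] using hh
  have hone : MemLp (fun _ : ℝ => (1:ℂ)) (ENNReal.ofReal (2:ℝ)) (volume.restrict s) :=
    memLp_const 1
  have hcs := integral_mul_norm_le_Lp_mul_Lq hconj hh' hone
  have h1 : ∫ x in s, ‖h x‖ * ‖(1:ℂ)‖ = ∫ x in s, ‖h x‖ := by simp
  have h2 : ∫ x in s, ‖(1:ℂ)‖ ^ (2:ℝ) = (volume s).toReal := by simp; rfl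
  rw [h1, h2] at hcs
  have hX : (0:ℝ) ≤ ∫ x in s, ‖h x‖ ^ (2:ℝ) :=
    integral_nonneg fun x => Real.rpow_nonneg (norm_nonneg _) _
  have hvol : (volume s).toReal ≤ 1 := by
    simpa using ENNReal.toReal_mono ENNReal.one_ne_top hμ
  have hnorm : ‖∫ x in s, h x‖ ≤ ∫ x in s, ‖h x‖ := norm_integral_le_integral_norm _
  have hrw : ∫ x in s, ‖h x‖ ^ (2:ℝ) = ∫ x in s, ‖h x‖ ^ 2 := by
    congr 1; ext x; rw [← Real.rpow_natCast (‖h x‖) 2]; norm_num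
  have hsq : (∫ x in s, ‖h x‖) ^ 2 ≤ ∫ x in s, ‖h x‖ ^ 2 := by
    have hb : ((∫ x in s, ‖h x‖ ^ (2:ℝ)) ^ (1/(2:ℝ)) * (volume s).toReal ^ (1/(2:ℝ))) ^ 2
        = (∫ x in s, ‖h x‖ ^ (2:ℝ)) * (volume s).toReal := by
      rw [mul_pow, ← Real.rpow_natCast _ 2, ← Real.rpow_natCast _ 2,
        ← Real.rpow_mul hX, ← Real.rpow_mul ENNReal.toReal_nonneg]
      norm_num
    calc (∫ x in s, ‖h x‖) ^ 2
        ≤ ((∫ x in s, ‖h x‖ ^ (2:ℝ)) ^ (1/(2:ℝ)) * (volume s).toReal ^ (1/(2:ℝ))) ^ 2 := by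
          apply pow_le_pow_left₀ (integral_nonneg fun x => norm_nonneg _) hcs
      _ = (∫ x in s, ‖h x‖ ^ (2:ℝ)) * (volume s).toReal := hb
      _ ≤ (∫ x in s, ‖h x‖ ^ (2:ℝ)) * 1 := mul_le_mul_of_nonneg_left hvol hX
      _ = ∫ x in s, ‖h x‖ ^ 2 := by rw [mul_one, hrw]
  calc ‖∫ x in s, h x‖ ^ 2 ≤ (∫ x in s, ‖h x‖) ^ 2 :=
        pow_le_pow_left₀ (norm_nonneg _) hnorm 2
    _ ≤ _ := hsq

set_option maxHeartbeats 1000000 in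
theorem stmt_14 (α β : ℝ) (hα : 0 < α) (hαβ : α < β) (hβ : β < 1) :
    ∃ C > (0:ℝ), ∀ a b : ℝ, a < b → ∀ u u' : ℝ → ℂ, IsH1On a b u u' →
      sInf {r : ℝ | ∃ v v' : ℝ → ℂ, IsH1On a b v v' ∧
          (∀ᵐ x ∂volume, x ∈ Ioo a b ∩ F1 α β → v' x = 0) ∧
          r = (∫ x in Ioo a b, ‖u x - v x‖ ^ 2) +
              ∫ x in Ioo a b, ‖u' x - v' x‖ ^ 2} ≤
        C ^ 2 * ∫ x in Ioo a b ∩ F1 α β, ‖u' x‖ ^ 2 := by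
  have hβα : (0:ℝ) < β - α := by linarith
  set t : ℝ := (β - α)⁻¹ with ht_def
  have htpos : 0 < t := inv_pos.mpr hβα
  refine ⟨2 * t + 4, by positivity, ?_⟩
  intro a b hab u u' hu
  -- basic setup
  have hF : MeasurableSet (F1 α β) := by
    have : IsOpen (F1 α β) := isOpen_iUnion fun n => isOpen_Ioo.union isOpen_Ioo
    exact this.measurableSet
  have hDF : MeasurableSet (Ioo a b ∩ F1 α β) := measurableSet_Ioo.inter hF
  haveI : IsFiniteMeasure (volume.restrict (Ioo a b)) :=
    ⟨by rw [Measure.restrict_apply_univ]; exact measure_Ioo_lt_top⟩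
  have hu2 : MemLp u' 2 (volume.restrict (Ioo a b)) := hu.1
  have hu1 : IntegrableOn u' (Ioo a b) volume :=
    memLp_one_iff_integrable.mp (hu2.mono_exponent one_le_two)
  set g : ℝ → ℂ := (Ioo a b ∩ F1 α β).indicator u' with hg_def
  have hgz : ∀ x : ℝ, x ∉ Ioo a b → g x = 0 :=
    fun x hx => Set.indicator_of_notMem (fun hc => hx hc.1) u'
  have hg_int : Integrable g volume :=
    (integrable_indicator_iff hDF).mpr (hu1.mono_set inter_subset_left)
  have hg2 : MemLp g 2 volume :=
    (memLp_indicator_iff_restrict hDF).mpr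
      (hu2.mono_measure (Measure.restrict_mono inter_subset_left le_rfl))
  have hgsq_eq : (fun x => ‖g x‖ ^ 2) = (Ioo a b ∩ F1 α β).indicator (fun x => ‖u' x‖ ^ 2) := by
    funext x
    by_cases hx : x ∈ Ioo a b ∩ F1 α β <;> simp [hg_def, Set.indicator_apply, hx]
  have hgsq_int : Integrable (fun x => ‖g x‖ ^ 2) volume := by
    rw [hgsq_eq]
    exact (integrable_indicator_iff hDF).mpr
      ((show IntegrableOn (fun x => ‖u' x‖ ^ 2) (Ioo a b) volume from
        memL2_integrable_sq hu2).mono_set inter_subset_left)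
  set G : ℝ := ∫ x in Ioo a b ∩ F1 α β, ‖u' x‖ ^ 2 with hG_def
  have hgG : (∫ x, ‖g x‖ ^ 2) = G := by rw [hgsq_eq, integral_indicator hDF]
  have hGnn : 0 ≤ G := integral_nonneg fun x => by positivity
  have hcellG : ∀ s : Set ℝ, ∫ x in s, ‖g x‖ ^ 2 ≤ G := by
    intro s
    rw [← hgG]
    exact setIntegral_le_integral hgsq_int (Filter.Eventually.of_forall fun x => by positivity)
  set M : ℝ := ∫ x, ‖g x‖ with hM_def
  -- the cell averages
  set A : ℤ → ℂ := fun n => ∫ x in Ioo ((n:ℝ) + α) ((n:ℝ) + 1 + α), g x with hA_def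
  set P : ℤ → ℝ := fun n => ∫ x in Ioo ((n:ℝ) + α) ((n:ℝ) + 1 + α), ‖g x‖ ^ 2 with hP_def
  have hPnn : ∀ n, 0 ≤ P n := fun n => integral_nonneg fun x => by positivity
  have hP_le_G : ∀ n, P n ≤ G := fun n => hcellG _
  have hAm : ∀ m : ℤ, A m = ∫ x in Ioo ((m:ℝ) + α) ((m:ℝ) + 1 + α), g x := fun m => rfl
  have hPm : ∀ m : ℤ, P m = ∫ x in Ioo ((m:ℝ) + α) ((m:ℝ) + 1 + α), ‖g x‖ ^ 2 := fun m => rfl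
  have hAbd : ∀ n, ‖A n‖ ≤ M := by
    intro n
    refine (norm_integral_le_integral_norm _).trans ?_
    exact setIntegral_le_integral hg_int.norm
      (Filter.Eventually.of_forall fun x => norm_nonneg _)
  have hM0 : 0 ≤ M := integral_nonneg fun x => norm_nonneg _
  have hA_sq : ∀ n : ℤ, ‖A n‖ ^ 2 ≤ P n := by
    intro n
    refine sq_norm_setIntegral_le ?_ (hg2.restrict _)
    rw [Real.volume_Ioo, show ((n:ℝ) + 1 + α) - ((n:ℝ) + α) = 1 by ring, ENNReal.ofReal_one]
  have hAz : ∀ m : ℤ, ((m:ℝ) + 1 + α ≤ a ∨ b ≤ (m:ℝ) + α) → A m = 0 := by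
    intro m hm
    rw [hAm m]
    rw [setIntegral_congr_fun measurableSet_Ioo (g := fun _ => (0:ℂ))]
    · simp
    · intro y hy
      apply hgz
      intro hc
      rcases hm with h | h
      · have h1 := hy.2; have h2 := hc.1;
        linarith
      · have h1 := hy.1; have h2 := hc.2;
        linarith
  -- the compensating function w
  set w : ℝ → ℂ := fun x =>
    if x - (⌊x - α⌋ : ℝ) - α < β - α then (β - α)⁻¹ • A (⌊x - α⌋ - 1) else 0 with hw_def
  have hwmeas : Measurable w := by
    apply Measurable.ite
    · have hm1 : Measurable fun x : ℝ => (⌊x - α⌋ : ℝ) := by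
        have := (measurable_of_countable (fun n : ℤ => (n:ℝ))).comp
            ((measurable_id.sub (measurable_const : Measurable fun _ : ℝ => α)).floor)
        simpa [Function.comp_def] using this
      have hm2 : Measurable fun x : ℝ => x - (⌊x - α⌋ : ℝ) - α :=
        (measurable_id.sub hm1).sub measurable_const
      exact measurableSet_lt hm2 measurable_const
    · have := (measurable_of_countable (fun n : ℤ => (β - α)⁻¹ • A (n - 1))).comp
        ((measurable_id.sub (measurable_const : Measurable fun _ : ℝ => α)).floor)
      simpa [Function.comp_def] using this
    · exact measurable_const
  have hfloor : ∀ (n : ℤ) (x : ℝ), (n:ℝ) + α ≤ x → x < (n:ℝ) + 1 + α → ⌊x - α⌋ = n := by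
    intro n x h1 h2
    rw [Int.floor_eq_iff]
    refine ⟨by push_cast; linarith, by push_cast; linarith⟩
  have hw0F : ∀ x ∈ F1 α β, w x = 0 := by
    intro x hx
    rcases Set.mem_iUnion.mp hx with ⟨n, hn⟩
    rcases hn with h | h
    · obtain ⟨h1, h2⟩ := h
      have hfl : ⌊x - α⌋ = n - 1 := by
        rw [Int.floor_eq_iff]
        refine ⟨by push_cast; linarith, by push_cast; linarith⟩
      rw [hw_def]
      simp only [hfl]
      rw [if_neg]
      push_cast
      intro hcon
      linarith
    · obtain ⟨h1, h2⟩ := h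
      have hfl : ⌊x - α⌋ = n := by
        rw [Int.floor_eq_iff]
        refine ⟨by push_cast; linarith, by push_cast; linarith⟩
      rw [hw_def]
      simp only [hfl]
      rw [if_neg]
      push_cast
      intro hcon
      linarith
  have hw0left : ∀ x : ℝ, x ≤ a → w x = 0 := by
    intro x hx
    have h1 : (⌊x - α⌋ : ℝ) ≤ x - α := Int.floor_le _
    have hz : A (⌊x - α⌋ - 1) = 0 := by
      apply hAz
      left
      push_cast
      linarith
    rw [hw_def]
    simp only [hz, smul_zero, ite_self]
  have hw0right : ∀ x : ℝ, b + 2 ≤ x → w x = 0 := by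
    intro x hx
    have h1 : x - α < (⌊x - α⌋ : ℝ) + 1 := Int.lt_floor_add_one _
    have hz : A (⌊x - α⌋ - 1) = 0 := by
      apply hAz
      right
      push_cast
      linarith
    rw [hw_def]
    simp only [hz, smul_zero, ite_self]
  have hw_soft : ∀ (n : ℤ) (x : ℝ), (n:ℝ) + α < x → x < (n:ℝ) + β →
      w x = (β - α)⁻¹ • A (n - 1) := by
    intro n x h1 h2
    rw [hw_def]
    simp only [hfloor n x h1.le (by linarith)]
    rw [if_pos (by linarith)]
  have hw_stiff : ∀ (n : ℤ) (x : ℝ), (n:ℝ) + β ≤ x → x < (n:ℝ) + 1 + α → w x = 0 := by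
    intro n x h1 h2
    rw [hw_def]
    simp only [hfloor n x (by linarith) h2]
    rw [if_neg (by push_cast; intro hcon; linarith)]
  have hwbd_cell : ∀ (n : ℤ) (x : ℝ), (n:ℝ) + α ≤ x → x < (n:ℝ) + 1 + α →
      ‖w x‖ ≤ t * ‖A (n - 1)‖ := by
    intro n x h1 h2
    rw [hw_def]
    simp only [hfloor n x h1 h2]
    split
    · rw [norm_smul, norm_inv, Real.norm_eq_abs, abs_of_pos hβα]
    · simp only [norm_zero]
      positivity
  have hwbdM : ∀ x : ℝ, ‖w x‖ ≤ t * M := by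
    intro x
    have h1 : (⌊x - α⌋ : ℝ) ≤ x - α := Int.floor_le _
    have h2 : x - α < (⌊x - α⌋ : ℝ) + 1 := Int.lt_floor_add_one _
    calc ‖w x‖ ≤ t * ‖A (⌊x - α⌋ - 1)‖ :=
          hwbd_cell (⌊x - α⌋) x (by linarith) (by linarith)
      _ ≤ t * M := mul_le_mul_of_nonneg_left (hAbd _) htpos.le
  have hw_ind : w = (Ioc a (b + 2)).indicator w := by
    funext x
    by_cases hx : x ∈ Ioc a (b + 2)
    · rw [Set.indicator_of_mem hx]
    · rw [Set.indicator_of_notMem hx]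
      rcases not_and_or.mp hx with h | h
      · exact hw0left x (not_lt.mp h)
      · exact hw0right x (not_le.mp h).le
  have hw_int : Integrable w volume := by
    rw [hw_ind]
    apply (integrable_indicator_iff measurableSet_Ioc).mpr
    haveI : IsFiniteMeasure (volume.restrict (Ioc a (b + 2))) :=
      ⟨by rw [Measure.restrict_apply_univ]; exact measure_Ioc_lt_top⟩
    exact memLp_one_iff_integrable.mp
      (MemLp.of_bound (hwmeas.aestronglyMeasurable.restrict) (t * M)
        (Filter.Eventually.of_forall hwbdM))
  have hw2 : MemLp w 2 (volume.restrict (Ioo a b)) :=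
    MemLp.of_bound (hwmeas.aestronglyMeasurable.restrict) (t * M)
      (Filter.Eventually.of_forall hwbdM)
  -- integral of w over one cell
  have hwcell : ∀ n : ℤ, (∫ x in Ioo ((n:ℝ) + α) ((n:ℝ) + 1 + α), w x) = A (n - 1) := by
    intro n
    have hsplit : Ioo ((n:ℝ) + α) ((n:ℝ) + 1 + α)
        = Ioo ((n:ℝ) + α) ((n:ℝ) + β) ∪ Ico ((n:ℝ) + β) ((n:ℝ) + 1 + α) :=
      (Ioo_union_Ico_eq_Ioo (by linarith) (by linarith)).symm
    rw [hsplit, setIntegral_union]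
    · have h1 : (∫ x in Ioo ((n:ℝ) + α) ((n:ℝ) + β), w x)
          = (β - α) • ((β - α)⁻¹ • A (n - 1)) := by
        rw [setIntegral_congr_fun measurableSet_Ioo
          (g := fun _ => (β - α)⁻¹ • A (n - 1))
          (fun x hx => hw_soft n x hx.1 hx.2), setIntegral_const]
        congr 1
        rw [Real.volume_real_Ioo, show (n:ℝ) + β - ((n:ℝ) + α) = β - α by ring,
          max_eq_left hβα.le]
      have h2 : (∫ x in Ico ((n:ℝ) + β) ((n:ℝ) + 1 + α), w x) = 0 := by
        rw [setIntegral_congr_fun measurableSet_Ico (g := fun _ => (0:ℂ))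
          (fun x hx => hw_stiff n x hx.1 hx.2)]
        simp
      rw [h1, h2, add_zero, smul_smul, mul_inv_cancel₀ hβα.ne', one_smul]
    · exact Set.disjoint_left.mpr fun x hx hy => absurd hy.1 (not_le.mpr hx.2)
    · exact measurableSet_Ico
    · exact hw_int.integrableOn
    · exact hw_int.integrableOn
  -- telescoping identity
  have key : ∀ n : ℤ, ⌊a - α⌋ ≤ n →
      (∫ τ in a..((n:ℝ) + α), g τ) - (∫ τ in a..((n:ℝ) + α), w τ) = A (n - 1) := by
    intro n hn
    refine Int.le_induction (motive := fun k _ =>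
      (∫ τ in a..((k:ℝ) + α), g τ) - (∫ τ in a..((k:ℝ) + α), w τ) = A (k - 1)) ?_ ?_ n hn
    · have hle : (⌊a - α⌋ : ℝ) + α ≤ a := by
        have := Int.floor_le (a - α); linarith
      have hg0 : (∫ τ in a..((⌊a - α⌋:ℝ) + α), g τ) = 0 := by
        rw [intervalIntegral.integral_of_ge hle]
        rw [setIntegral_congr_fun measurableSet_Ioc (g := fun _ => (0:ℂ))
          (fun y hy => hgz y (fun hc => absurd hc.1 (not_lt.mpr hy.2)))]
        simp
      have hw0 : (∫ τ in a..((⌊a - α⌋:ℝ) + α), w τ) = 0 := by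
        rw [intervalIntegral.integral_of_ge hle]
        rw [setIntegral_congr_fun measurableSet_Ioc (g := fun _ => (0:ℂ))
          (fun y hy => hw0left y hy.2)]
        simp
      rw [hg0, hw0, hAz (⌊a - α⌋ - 1) (Or.inl (by push_cast; linarith)), sub_zero]
    · intro n hn ih
      have hub : ((n + 1 : ℤ) : ℝ) + α = (n:ℝ) + 1 + α := by push_cast; ring
      have hlb : ((n:ℝ) + α) ≤ (n:ℝ) + 1 + α := by linarith
      have hgd : (∫ τ in a..(((n+1:ℤ)):ℝ) + α, g τ) - (∫ τ in a..((n:ℝ) + α), g τ) = A n := by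
        rw [intervalIntegral.integral_interval_sub_left hg_int.intervalIntegrable
          hg_int.intervalIntegrable, hub, intervalIntegral.integral_of_le hlb,
          integral_Ioc_eq_integral_Ioo, ← hAm n]
      have hwd : (∫ τ in a..(((n+1:ℤ)):ℝ) + α, w τ) - (∫ τ in a..((n:ℝ) + α), w τ)
          = A (n - 1) := by
        rw [intervalIntegral.integral_interval_sub_left hw_int.intervalIntegrable
          hw_int.intervalIntegrable, hub, intervalIntegral.integral_of_le hlb,
          integral_Ioc_eq_integral_Ioo, hwcell n]
      have hn1 : ((n + 1 - 1 : ℤ)) = n := by ring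
      rw [hn1]
      linear_combination hgd - hwd + ih
  -- the primitive Φ
  set f : ℝ → ℂ := fun x => g x - w x with hf_def
  have hf_int : Integrable f volume := hg_int.sub hw_int
  set Φ : ℝ → ℂ := fun x => ∫ τ in a..x, f τ with hΦ_def
  have hΦ_eq : ∀ x : ℝ, Φ x = (∫ τ in a..x, g τ) - ∫ τ in a..x, w τ := by
    intro x
    rw [hΦ_def]
    exact intervalIntegral.integral_sub hg_int.intervalIntegrable hw_int.intervalIntegrable
  -- pointwise bound for Φ
  have keybound : ∀ (n : ℤ) (x : ℝ), x ∈ Ioo a b → (n:ℝ) + α ≤ x → x < (n:ℝ) + 1 + α →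
      ‖Φ x‖ ^ 2 ≤ 2 * P n + 2 * (1 + t) ^ 2 * P (n - 1) := by
    intro n x hx h1 h2
    have hNa : ⌊a - α⌋ ≤ n := by
      rw [← hfloor n x h1 h2]
      exact Int.floor_le_floor (by linarith [hx.1])
    have e1 : (∫ τ in a..x, g τ) - (∫ τ in a..((n:ℝ) + α), g τ)
        = ∫ y in Ioc ((n:ℝ) + α) x, g y := by
      rw [intervalIntegral.integral_interval_sub_left hg_int.intervalIntegrable
        hg_int.intervalIntegrable, intervalIntegral.integral_of_le h1]
    have e2 : (∫ τ in a..x, w τ) - (∫ τ in a..((n:ℝ) + α), w τ)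
        = ∫ y in Ioc ((n:ℝ) + α) x, w y := by
      rw [intervalIntegral.integral_interval_sub_left hw_int.intervalIntegrable
        hw_int.intervalIntegrable, intervalIntegral.integral_of_le h1]
    have hΦid : Φ x = (∫ y in Ioc ((n:ℝ) + α) x, g y) - (∫ y in Ioc ((n:ℝ) + α) x, w y)
        + A (n - 1) := by
      have := key n hNa
      rw [hΦ_eq x]
      linear_combination e1 - e2 + this
    have hT1 : ‖∫ y in Ioc ((n:ℝ) + α) x, g y‖ ^ 2 ≤ P n := by
      have hvol : volume (Ioc ((n:ℝ) + α) x) ≤ 1 := by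
        rw [Real.volume_Ioc]
        exact ENNReal.ofReal_le_one.mpr (by linarith)
      refine (sq_norm_setIntegral_le hvol (hg2.restrict _)).trans ?_
      refine setIntegral_mono_set hgsq_int.integrableOn
        (Filter.Eventually.of_forall fun y => by positivity) ?_
      exact Filter.Eventually.of_forall fun y (hy : y ∈ Ioc _ x) =>
        ⟨hy.1, lt_of_le_of_lt hy.2 h2⟩
    have hT2 : ‖∫ y in Ioc ((n:ℝ) + α) x, w y‖ ≤ t * ‖A (n - 1)‖ := by
      have hb : ∀ y ∈ Ioc ((n:ℝ) + α) x, ‖w y‖ ≤ t * ‖A (n - 1)‖ :=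
        fun y hy => hwbd_cell n y hy.1.le (lt_of_le_of_lt hy.2 h2)
      have := norm_setIntegral_le_of_norm_le_const
        (show volume (Ioc ((n:ℝ) + α) x) < ⊤ from measure_Ioc_lt_top) hb
      refine this.trans ?_
      have hv1 : (volume (Ioc ((n:ℝ) + α) x)).toReal ≤ 1 := by
        rw [Real.volume_Ioc]
        rcases le_or_gt x ((n:ℝ) + α) with h | h
        · rw [ENNReal.ofReal_eq_zero.mpr (by linarith)]; simp
        · rw [ENNReal.toReal_ofReal (by linarith)]; linarith
      calc t * ‖A (n - 1)‖ * (volume (Ioc ((n:ℝ) + α) x)).toReal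
          ≤ t * ‖A (n - 1)‖ * 1 := by
            exact mul_le_mul_of_nonneg_left hv1 (by positivity)
        _ = t * ‖A (n - 1)‖ := mul_one _
    have hΦn : ‖Φ x‖ ≤ ‖∫ y in Ioc ((n:ℝ) + α) x, g y‖ + (1 + t) * ‖A (n - 1)‖ := by
      rw [hΦid]
      refine (norm_add_le _ _).trans ?_
      have := norm_sub_le (∫ y in Ioc ((n:ℝ) + α) x, g y) (∫ y in Ioc ((n:ℝ) + α) x, w y)
      nlinarith [norm_nonneg (A (n - 1))]
    have hsq : ‖Φ x‖ ^ 2 ≤ (‖∫ y in Ioc ((n:ℝ) + α) x, g y‖ + (1 + t) * ‖A (n - 1)‖) ^ 2 :=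
      pow_le_pow_left₀ (norm_nonneg _) hΦn 2
    nlinarith [hA_sq (n - 1), sq_nonneg (‖∫ y in Ioc ((n:ℝ) + α) x, g y‖ - (1 + t) * ‖A (n - 1)‖),
      norm_nonneg (∫ y in Ioc ((n:ℝ) + α) x, g y), norm_nonneg (A (n - 1)), htpos.le]
  -- summation over cells
  have cellsum : ∀ (h : ℝ → ℝ) (q : ℤ → ℝ), IntegrableOn h (Ioo a b) volume →
      (∀ x, 0 ≤ h x) → (∀ n, 0 ≤ q n) →
      (∀ (n : ℤ) (x : ℝ), x ∈ Ioo a b → (n:ℝ) + α ≤ x → x < (n:ℝ) + 1 + α → h x ≤ q n) →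
      (∫ x in Ioo a b, h x) ≤ ∑ n ∈ Finset.Icc ⌊a - α⌋ ⌊b - α⌋, q n := by
    intro h q hint hnn hqnn hbd
    have hDeq : Ioo a b = ⋃ n ∈ Finset.Icc ⌊a - α⌋ ⌊b - α⌋,
        (Ioo a b ∩ Ico ((n:ℝ) + α) ((n:ℝ) + 1 + α)) := by
      ext x
      simp only [mem_iUnion, Finset.mem_Icc, mem_inter_iff, mem_Ioo, mem_Ico, exists_prop]
      constructor
      · intro hx
        refine ⟨⌊x - α⌋, ⟨Int.floor_le_floor (by linarith [hx.1]),
          Int.floor_le_floor (by linarith [hx.2])⟩, hx, ?_, ?_⟩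
        · linarith [Int.floor_le (x - α)]
        · linarith [Int.lt_floor_add_one (x - α)]
      · rintro ⟨n, _, hx, _⟩
        exact hx
    have hmeas : ∀ n : ℤ, MeasurableSet (Ioo a b ∩ Ico ((n:ℝ) + α) ((n:ℝ) + 1 + α)) :=
      fun n => measurableSet_Ioo.inter measurableSet_Ico
    have hdisj : (Finset.Icc ⌊a - α⌋ ⌊b - α⌋ : Set ℤ).Pairwise
        (Function.onFun Disjoint fun n => Ioo a b ∩ Ico ((n:ℝ) + α) ((n:ℝ) + 1 + α)) := by
      intro m _ n _ hmn
      refine Set.disjoint_left.mpr fun x hxm hxn => hmn ?_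
      rw [← hfloor m x hxm.2.1 hxm.2.2, ← hfloor n x hxn.2.1 hxn.2.2]
    have hsum : (∫ x in Ioo a b, h x)
        = ∑ n ∈ Finset.Icc ⌊a - α⌋ ⌊b - α⌋,
            ∫ x in Ioo a b ∩ Ico ((n:ℝ) + α) ((n:ℝ) + 1 + α), h x := by
      conv_lhs => rw [hDeq]
      exact integral_biUnion_finset _ (fun n _ => hmeas n) hdisj
        (fun n _ => hint.mono_set inter_subset_left)
    calc (∫ x in Ioo a b, h x)
        = ∑ n ∈ Finset.Icc ⌊a - α⌋ ⌊b - α⌋,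
            ∫ x in Ioo a b ∩ Ico ((n:ℝ) + α) ((n:ℝ) + 1 + α), h x := hsum
      _ ≤ ∑ n ∈ Finset.Icc ⌊a - α⌋ ⌊b - α⌋, q n := by
          refine Finset.sum_le_sum fun n hn => ?_
          have hvol : (volume (Ioo a b ∩ Ico ((n:ℝ) + α) ((n:ℝ) + 1 + α))).toReal ≤ 1 := by
            have hle : volume (Ioo a b ∩ Ico ((n:ℝ) + α) ((n:ℝ) + 1 + α)) ≤ 1 := by
              refine (measure_mono inter_subset_right).trans ?_
              rw [Real.volume_Ico, show (n:ℝ) + 1 + α - ((n:ℝ) + α) = 1 by ring,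
                ENNReal.ofReal_one]
            simpa using ENNReal.toReal_mono ENNReal.one_ne_top hle
          calc (∫ x in Ioo a b ∩ Ico ((n:ℝ) + α) ((n:ℝ) + 1 + α), h x)
              ≤ ∫ _ in Ioo a b ∩ Ico ((n:ℝ) + α) ((n:ℝ) + 1 + α), q n := by
                refine setIntegral_mono_on
                  (hint.mono_set inter_subset_left) ?_ (hmeas n) ?_
                · exact (integrableOn_const_iff (C := q n)).mpr (Or.inr ((measure_mono inter_subset_right).trans_lt
                    measure_Ico_lt_top))
                · intro x hx
                  exact hbd n x hx.1 hx.2.1 hx.2.2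
            _ = (volume (Ioo a b ∩ Ico ((n:ℝ) + α) ((n:ℝ) + 1 + α))).toReal • q n :=
                setIntegral_const _
            _ ≤ q n := by
                rw [smul_eq_mul]
                exact mul_le_of_le_one_left (hqnn n) hvol
  -- sums of P are bounded by G
  have sumP : ∀ s : Finset ℤ, (∑ n ∈ s, P n) ≤ G := by
    intro s
    have hdisj : (s : Set ℤ).Pairwise
        (Function.onFun Disjoint fun n : ℤ => Ioo ((n:ℝ) + α) ((n:ℝ) + 1 + α)) := by
      intro m _ n _ hmn
      refine Set.disjoint_left.mpr fun x hxm hxn => hmn ?_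
      rw [← hfloor m x hxm.1.le hxm.2, ← hfloor n x hxn.1.le hxn.2]
    have : (∑ n ∈ s, P n) = ∫ x in ⋃ n ∈ s, Ioo ((n:ℝ) + α) ((n:ℝ) + 1 + α), ‖g x‖ ^ 2 :=
      (integral_biUnion_finset _ (fun n _ => measurableSet_Ioo) hdisj
        (fun n _ => hgsq_int.integrableOn)).symm
    rw [this, ← hgG]
    exact setIntegral_le_integral hgsq_int (Filter.Eventually.of_forall fun x => by positivity)
  have sumP' : ∀ s : Finset ℤ, (∑ n ∈ s, P (n - 1)) ≤ G := by
    intro s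
    have : (∑ n ∈ s, P (n - 1)) = ∑ m ∈ s.image (· - 1), P m :=
      (Finset.sum_image (by intro x _ y _ h; exact sub_left_inj.mp h)).symm
    rw [this]
    exact sumP _
  -- the three integral bounds
  have hΦcont : Continuous Φ := hf_int.continuous_primitive a
  have hΦsq_int : IntegrableOn (fun x => ‖Φ x‖ ^ 2) (Ioo a b) volume :=
    ((hΦcont.norm.pow 2).integrableOn_Ioc).mono_set Ioo_subset_Ioc_self
  have Ibound1 : (∫ x in Ioo a b, ‖Φ x‖ ^ 2) ≤ (2 + 2 * (1 + t) ^ 2) * G := by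
    have := cellsum (fun x => ‖Φ x‖ ^ 2) (fun n => 2 * P n + 2 * (1 + t) ^ 2 * P (n - 1))
      hΦsq_int (fun x => by positivity)
      (fun n => by have := hPnn n; have := hPnn (n - 1); positivity)
      (fun n x hx h1 h2 => keybound n x hx h1 h2)
    refine this.trans ?_
    rw [Finset.sum_add_distrib, ← Finset.mul_sum, ← Finset.mul_sum]
    have s1 := sumP (Finset.Icc ⌊a - α⌋ ⌊b - α⌋)
    have s2 := sumP' (Finset.Icc ⌊a - α⌋ ⌊b - α⌋)
    nlinarith [htpos.le]
  have Ibound2 : (∫ x in Ioo a b, ‖w x‖ ^ 2) ≤ t ^ 2 * G := by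
    have := cellsum (fun x => ‖w x‖ ^ 2) (fun n => t ^ 2 * P (n - 1))
      (memL2_integrable_sq hw2) (fun x => by positivity)
      (fun n => by have := hPnn (n - 1); positivity)
      (fun n x hx h1 h2 => by
        have hb := hwbd_cell n x h1 h2
        have h3 : ‖w x‖ ^ 2 ≤ (t * ‖A (n - 1)‖) ^ 2 :=
          pow_le_pow_left₀ (norm_nonneg _) hb 2
        have h4 : (t * ‖A (n - 1)‖) ^ 2 = t ^ 2 * ‖A (n - 1)‖ ^ 2 := by ring
        refine h3.trans ?_
        rw [h4]
        exact mul_le_mul_of_nonneg_left (hA_sq (n - 1)) (by positivity))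
    refine this.trans ?_
    rw [← Finset.mul_sum]
    exact mul_le_mul_of_nonneg_left (sumP' _) (by positivity)
  have Ibound3 : (∫ x in Ioo a b, ‖f x‖ ^ 2) ≤ 2 * G + 2 * (t ^ 2 * G) := by
    have hfsq_int : Integrable (fun x => ‖f x‖ ^ 2) (volume.restrict (Ioo a b)) :=
      memL2_integrable_sq ((hg2.restrict _).sub hw2)
    have hgsq_int' : Integrable (fun x => ‖g x‖ ^ 2) (volume.restrict (Ioo a b)) :=
      hgsq_int.restrict
    have hwsq_int : Integrable (fun x => ‖w x‖ ^ 2) (volume.restrict (Ioo a b)) :=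
      memL2_integrable_sq hw2
    have hpt : ∀ x, ‖f x‖ ^ 2 ≤ 2 * ‖g x‖ ^ 2 + 2 * ‖w x‖ ^ 2 := by
      intro x
      have := norm_sub_le (g x) (w x)
      have h2 : ‖f x‖ ≤ ‖g x‖ + ‖w x‖ := by rw [hf_def]; exact this
      have h3 : ‖f x‖ ^ 2 ≤ (‖g x‖ + ‖w x‖) ^ 2 := pow_le_pow_left₀ (norm_nonneg _) h2 2
      nlinarith [sq_nonneg (‖g x‖ - ‖w x‖)]
    calc (∫ x in Ioo a b, ‖f x‖ ^ 2)
        ≤ ∫ x in Ioo a b, (2 * ‖g x‖ ^ 2 + 2 * ‖w x‖ ^ 2) := by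
          exact integral_mono hfsq_int ((hgsq_int'.const_mul 2).add (hwsq_int.const_mul 2)) hpt
      _ = 2 * (∫ x in Ioo a b, ‖g x‖ ^ 2) + 2 * ∫ x in Ioo a b, ‖w x‖ ^ 2 := by
          rw [integral_add (hgsq_int'.const_mul 2) (hwsq_int.const_mul 2),
            integral_const_mul, integral_const_mul]
      _ ≤ 2 * G + 2 * (t ^ 2 * G) := by
          have := hcellG (Ioo a b)
          nlinarith [Ibound2]
  -- the candidate v
  set v : ℝ → ℂ := fun x => u x - Φ x with hv_def
  set v' : ℝ → ℂ := fun x => u' x - f x with hv'_def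
  have hv'2 : MemLp v' 2 (volume.restrict (Ioo a b)) :=
    hu2.sub ((hg2.restrict _).sub hw2)
  have hu'ii : ∀ x ∈ Icc a b, IntervalIntegrable u' volume a x := by
    intro x hx
    rw [intervalIntegrable_iff, uIoc_of_le hx.1]
    refine ((integrableOn_Ioc_iff_integrableOn_Ioo (f := u') (a := a) (b := b)).mpr hu1).mono_set ?_
    exact Ioc_subset_Ioc le_rfl hx.2
  have hIsH1 : IsH1On a b v v' := by
    constructor
    · exact hv'2
    · intro x hx
      have h1 : v a = u a := by
        rw [hv_def]
        simp only [hΦ_def, intervalIntegral.integral_same, sub_zero]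
      have h2 : (∫ τ in a..x, v' τ) = (∫ τ in a..x, u' τ) - ∫ τ in a..x, f τ :=
        intervalIntegral.integral_sub (hu'ii x hx) hf_int.intervalIntegrable
      have hΦx : Φ x = ∫ τ in a..x, f τ := rfl
      show u x - Φ x = v a + ∫ τ in a..x, v' τ
      rw [h1, h2, hu.2 x hx, hΦx]
      ring
  have hv'0 : ∀ᵐ x ∂(volume : Measure ℝ), x ∈ Ioo a b ∩ F1 α β → v' x = 0 := by
    refine Filter.Eventually.of_forall fun x hx => ?_
    rw [hv'_def]
    simp only
    rw [hf_def]
    simp only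
    rw [hg_def, Set.indicator_of_mem hx, hw0F x hx.2]
    ring
  -- conclusion
  have hbdd : BddBelow {r : ℝ | ∃ v v' : ℝ → ℂ, IsH1On a b v v' ∧
      (∀ᵐ x ∂volume, x ∈ Ioo a b ∩ F1 α β → v' x = 0) ∧
      r = (∫ x in Ioo a b, ‖u x - v x‖ ^ 2) + ∫ x in Ioo a b, ‖u' x - v' x‖ ^ 2} := by
    refine ⟨0, fun r hr => ?_⟩
    obtain ⟨v₀, v₀', _, _, rfl⟩ := hr
    exact add_nonneg (integral_nonneg fun x => by positivity)
      (integral_nonneg fun x => by positivity)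
  have hmem : (∫ x in Ioo a b, ‖u x - v x‖ ^ 2) + (∫ x in Ioo a b, ‖u' x - v' x‖ ^ 2) ∈
      {r : ℝ | ∃ v v' : ℝ → ℂ, IsH1On a b v v' ∧
      (∀ᵐ x ∂volume, x ∈ Ioo a b ∩ F1 α β → v' x = 0) ∧
      r = (∫ x in Ioo a b, ‖u x - v x‖ ^ 2) + ∫ x in Ioo a b, ‖u' x - v' x‖ ^ 2} :=
    ⟨v, v', hIsH1, hv'0, rfl⟩
  refine (csInf_le hbdd hmem).trans ?_
  have huv : ∀ x : ℝ, u x - v x = Φ x := fun x => by rw [hv_def]; ring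
  have huv' : ∀ x : ℝ, u' x - v' x = f x := fun x => by rw [hv'_def]; ring
  have e1 : (∫ x in Ioo a b, ‖u x - v x‖ ^ 2) = ∫ x in Ioo a b, ‖Φ x‖ ^ 2 := by
    congr 1; funext x; rw [huv x]
  have e2 : (∫ x in Ioo a b, ‖u' x - v' x‖ ^ 2) = ∫ x in Ioo a b, ‖f x‖ ^ 2 := by
    congr 1; funext x; rw [huv' x]
  rw [e1, e2]
  have htot : (∫ x in Ioo a b, ‖Φ x‖ ^ 2) + (∫ x in Ioo a b, ‖f x‖ ^ 2)
      ≤ (2 + 2 * (1 + t) ^ 2) * G + (2 * G + 2 * (t ^ 2 * G)) := by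
    linarith [Ibound1, Ibound3]
  refine htot.trans ?_
  nlinarith [htpos.le, hGnn]

end
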